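/- Let φ, ψ ∈ ℂ^d be unit vectors (d ≥ 2), let ω be a 2×2 density matrix with entries ω_{kl}, and let P be the orthogonal projector onto span{φ̄, ψ̄} ⊂ ℂ^d (complex conjugates in the standard basis). Define Ξ on ℂ^d ⊗ ℂ² by Ξ = (1/2)[ ω₀₀ P ⊗ |0⟩⟨0| + ω₀₁ |φ̄⟩⟨ψ̄| ⊗ |0⟩⟨1| + ω₁₀ |ψ̄⟩⟨φ̄| ⊗ |1⟩⟨0| + ω₁₁ P ⊗ |1⟩⟨1| ]. Then the partial transpose of Ξ on the second (qubit) factor equals the operator obtained from Ξ by replacing ω with its transpose and exchanging the roles of φ and ψ; in particular, Ξ is positive semidefinite and has positive semidefinite partial transpose. -/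

import Mathlib

open Matrix Kronecker
open scoped ComplexOrder

/-- The rank-one operator |v⟩⟨w| on ℂ^d. -/
noncomputable def outer {d : ℕ} (v w : Fin d → ℂ) : Matrix (Fin d) (Fin d) ℂ :=
  Matrix.vecMulVec v (star w)

/-- The operator Ξ = (1/2)[ω₀₀ P⊗|0⟩⟨0| + ω₀₁|u⟩⟨v|⊗|0⟩⟨1| + ω₁₀|v⟩⟨u|⊗|1⟩⟨0|
+ ω₁₁ P⊗|1⟩⟨1|] on ℂ^d ⊗ ℂ². -/
noncomputable def Xi {d : ℕ} (ω : Matrix (Fin 2) (Fin 2) ℂ) (u v : Fin d → ℂ)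
    (P : Matrix (Fin d) (Fin d) ℂ) : Matrix (Fin d × Fin 2) (Fin d × Fin 2) ℂ :=
  (1/2 : ℂ) • (ω 0 0 • P ⊗ₖ Matrix.single 0 0 (1 : ℂ)
    + ω 0 1 • (outer u v) ⊗ₖ Matrix.single 0 1 (1 : ℂ)
    + ω 1 0 • (outer v u) ⊗ₖ Matrix.single 1 0 (1 : ℂ)
    + ω 1 1 • P ⊗ₖ Matrix.single 1 1 (1 : ℂ))

/-- Partial transpose on the second (qubit) factor. -/
noncomputable def ptC {d : ℕ} (M : Matrix (Fin d × Fin 2) (Fin d × Fin 2) ℂ) :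
    Matrix (Fin d × Fin 2) (Fin d × Fin 2) ℂ :=
  Matrix.of fun p q => M (p.1, q.2) (q.1, p.2)

lemma kron_conjTranspose {m n p q : Type*} (A : Matrix m n ℂ) (B : Matrix p q ℂ) :
    (A ⊗ₖ B)ᴴ = Aᴴ ⊗ₖ Bᴴ := by
  ext ⟨i,k⟩ ⟨j,l⟩
  simp [conjTranspose_apply, kroneckerMap_apply, mul_comm]

lemma kron_psd {m p : Type*} [Fintype m] [Fintype p] [DecidableEq m] [DecidableEq p]
    {A : Matrix m m ℂ} {B : Matrix p p ℂ} (hA : A.PosSemidef) (hB : B.PosSemidef) :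
    (A ⊗ₖ B).PosSemidef := by
  exact hA.kronecker hB

lemma psd_smul {m : Type*} [Fintype m] {A : Matrix m m ℂ} (hA : A.PosSemidef)
    {c : ℂ} (hc : 0 ≤ c) : (c • A).PosSemidef := by
  refine ⟨?_, fun x => ?_⟩
  · unfold Matrix.IsHermitian
    rw [conjTranspose_smul, hA.1, (IsSelfAdjoint.of_nonneg hc : star c = c)]
  · exact (hA.smul hc).2 x

noncomputable def Xm {d : ℕ} (u v : Fin d → ℂ) : Matrix (Fin d × Fin 2) (Fin 2) ℂ :=
  Matrix.of fun p l => if p.2 = l then (if p.2 = (0 : Fin 2) then u p.1 else v p.1) else 0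

lemma Xi_decomp {d : ℕ} (ω : Matrix (Fin 2) (Fin 2) ℂ) (u v : Fin d → ℂ)
    (P : Matrix (Fin d) (Fin d) ℂ) :
    Xi ω u v P = (1/2 : ℂ) • ((Xm u v) * ω * (Xm u v)ᴴ
      + ω 0 0 • (P - outer u u) ⊗ₖ Matrix.single 0 0 (1:ℂ)
      + ω 1 1 • (P - outer v v) ⊗ₖ Matrix.single 1 1 (1:ℂ)) := by
  unfold Xi Xm outer
  ext ⟨i,k⟩ ⟨j,l⟩
  fin_cases k <;> fin_cases l <;>
    simp [mul_apply, Fin.sum_univ_two, vecMulVec_apply, Matrix.single,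
      kroneckerMap_apply] <;> ring

lemma outer_herm {d : ℕ} (u : Fin d → ℂ) : (outer u u)ᴴ = outer u u := by
  ext i j; simp [outer, vecMulVec_apply, conjTranspose_apply, mul_comm]

lemma proj_sub_psd {d : ℕ} {P : Matrix (Fin d) (Fin d) ℂ} {u : Fin d → ℂ}
    (hPsa : Pᴴ = P) (hPP : P * P = P) (hPu : P *ᵥ u = u) (hu : dotProduct (star u) u = 1) :
    (P - outer u u).PosSemidef := by
  have hvP : star u ᵥ* P = star u := by
    have := congrArg star hPu
    rwa [star_mulVec, hPsa] at this
  have hPQ : P * outer u u = outer u u := by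
    ext i j
    simp only [mul_apply, outer, vecMulVec_apply, Pi.star_apply]
    rw [show ∑ k, P i k * (u k * star (u j)) = (∑ k, P i k * u k) * star (u j) by
      rw [Finset.sum_mul]; congr 1; ext k; ring]
    congr 1
    exact congrFun hPu i
  have hQP : outer u u * P = outer u u := by
    ext i j
    simp only [mul_apply, outer, vecMulVec_apply, Pi.star_apply]
    rw [show ∑ k, u i * star (u k) * P k j = u i * ∑ k, star (u k) * P k j by
      rw [Finset.mul_sum]; congr 1; ext k; ring]
    congr 1
    exact congrFun hvP j
  have hQQ : outer u u * outer u u = outer u u := by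
    ext i j
    simp only [mul_apply, outer, vecMulVec_apply, Pi.star_apply]
    rw [show ∑ k, u i * star (u k) * (u k * star (u j))
        = (u i * star (u j)) * ∑ k, star (u k) * u k by
      rw [Finset.mul_sum]; congr 1; ext k; ring]
    rw [show ∑ k, star (u k) * u k = dotProduct (star u) u from rfl, hu, mul_one]
  have herm : (P - outer u u)ᴴ = P - outer u u := by
    rw [conjTranspose_sub, hPsa, outer_herm]
  have key : P - outer u u = (P - outer u u)ᴴ * (P - outer u u) := by
    rw [herm, sub_mul, mul_sub, mul_sub, hPP, hPQ, hQP, hQQ]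
    abel
  rw [key]
  exact posSemidef_conjTranspose_mul_self _

lemma e00_psd : (Matrix.single (0:Fin 2) 0 (1:ℂ)).PosSemidef := by
  have : Matrix.single (0:Fin 2) 0 (1:ℂ) = Matrix.diagonal (Pi.single 0 1) := by
    ext i j; fin_cases i <;> fin_cases j <;> simp [Matrix.single]
  rw [this]
  refine Matrix.PosSemidef.diagonal ?_
  intro i; fin_cases i <;> simp [Complex.le_def, Pi.single_apply]

lemma e11_psd : (Matrix.single (1:Fin 2) 1 (1:ℂ)).PosSemidef := by
  have : Matrix.single (1:Fin 2) 1 (1:ℂ) = Matrix.diagonal (Pi.single 1 1) := by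
    ext i j; fin_cases i <;> fin_cases j <;> simp [Matrix.single]
  rw [this]
  refine Matrix.PosSemidef.diagonal ?_
  intro i; fin_cases i <;> simp [Complex.le_def, Pi.single_apply]

lemma Xi_psd {d : ℕ} {ω : Matrix (Fin 2) (Fin 2) ℂ} (hω : ω.PosSemidef)
    {u v : Fin d → ℂ} (hu : dotProduct (star u) u = 1) (hv : dotProduct (star v) v = 1)
    {P : Matrix (Fin d) (Fin d) ℂ} (hPsa : Pᴴ = P) (hPP : P * P = P)
    (hPu : P *ᵥ u = u) (hPv : P *ᵥ v = v) : (Xi ω u v P).PosSemidef := by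
  have h00 : 0 ≤ ω 0 0 := hω.diag_nonneg
  have h11 : 0 ≤ ω 1 1 := hω.diag_nonneg
  rw [Xi_decomp]
  refine psd_smul (((hω.mul_mul_conjTranspose_same (Xm u v)).add ?_).add ?_) ?_
  · exact psd_smul (kron_psd (proj_sub_psd hPsa hPP hPu hu) e00_psd) h00
  · exact psd_smul (kron_psd (proj_sub_psd hPsa hPP hPv hv) e11_psd) h11
  · norm_num [Complex.le_def]

lemma ptC_Xi {d : ℕ} (ω : Matrix (Fin 2) (Fin 2) ℂ) (u v : Fin d → ℂ)
    (P : Matrix (Fin d) (Fin d) ℂ) : ptC (Xi ω u v P) = Xi ωᵀ v u P := by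
  unfold ptC Xi outer
  ext ⟨i,k⟩ ⟨j,l⟩
  fin_cases k <;> fin_cases l <;>
    simp [vecMulVec_apply, Matrix.single, kroneckerMap_apply,
      Matrix.transpose_apply] <;> ring

/-- For unit vectors φ, ψ ∈ ℂ^d, a 2×2 density matrix ω, and P the orthogonal projector
onto span{φ̄, ψ̄}, the partial transpose of Ξ(ω,φ̄,ψ̄) equals Ξ(ωᵀ,ψ̄,φ̄); in particular Ξ
is positive semidefinite with positive semidefinite partial transpose. -/
theorem stmt14 {d : ℕ} (hd : 2 ≤ d) (φ ψ : Fin d → ℂ)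
    (hφ : dotProduct (star φ) φ = 1) (hψ : dotProduct (star ψ) ψ = 1)
    (ω : Matrix (Fin 2) (Fin 2) ℂ) (hω : ω.PosSemidef) (hωtr : ω.trace = 1)
    (P : Matrix (Fin d) (Fin d) ℂ)
    (hPsa : Pᴴ = P) (hPP : P * P = P)
    (hPφ : P.mulVec (star φ) = star φ) (hPψ : P.mulVec (star ψ) = star ψ)
    (hPrange : ∀ v : Fin d → ℂ,
      P.mulVec v ∈ Submodule.span ℂ {star φ, star ψ}) :
    ptC (Xi ω (star φ) (star ψ) P) = Xi ωᵀ (star ψ) (star φ) P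
      ∧ (Xi ω (star φ) (star ψ) P).PosSemidef
      ∧ (ptC (Xi ω (star φ) (star ψ) P)).PosSemidef := by
  have hu : dotProduct (star (star φ)) (star φ) = 1 := by
    rw [star_star, dotProduct_comm]; exact hφ
  have hv : dotProduct (star (star ψ)) (star ψ) = 1 := by
    rw [star_star, dotProduct_comm]; exact hψ
  refine ⟨ptC_Xi ω _ _ P, Xi_psd hω hu hv hPsa hPP hPφ hPψ, ?_⟩
  rw [ptC_Xi]
  exact Xi_psd hω.transpose hv hu hPsa hPP hPψ hPφ
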